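/- Fix a function ev assigning to each vertex v ∈ V a dart ev(v) of G with head v, and let L = {y_e − y_{ev(e₊)} : e a dart of G with e ≠ ev(e₊)}. Then every list without repetitions whose set of entries is exactly L is a regular sequence on the S-module S/J_G. -/

import Mathlib

open Finset MvPolynomial
set_option linter.unusedSectionVars false

noncomputable def lawrenceIdeal {V : Type} [Fintype V] [DecidableEq V]
    (G : SimpleGraph V) [DecidableRel G.Adj] (K : Type) [Field K] :
    Ideal (MvPolynomial G.Dart K) :=
  Ideal.span {p | ∃ f : V → ℤ,
    p = (∏ e : G.Dart, X e ^ (f e.fst - f e.snd).toNat) -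
        ∏ e : G.Dart, X e ^ (f e.snd - f e.fst).toNat}

namespace Stmt12Aux

variable {V : Type} [Fintype V] [Nonempty V] [DecidableEq V] {G : SimpleGraph V}
  [DecidableRel G.Adj] {K : Type} [Field K]

noncomputable section

open Classical in
/-- merge map on darts -/
def rho (ev : V → G.Dart) (T : Set G.Dart) : G.Dart → G.Dart :=
  fun e => if e ∈ T then ev e.fst else e

/-- discrete differential -/
def dz (G : SimpleGraph V) (f : V → ℤ) : G.Dart → ℤ := fun e => f e.fst - f e.snd

/-- pooled vector, ℤ version -/
def Pz (ev : V → G.Dart) (T : Set G.Dart) (c : G.Dart → ℤ) : G.Dart → ℤ :=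
  fun g => ∑ e, if rho ev T e = g then c e else 0

/-- pooled vector, ℕ version -/
def Pn (ev : V → G.Dart) (T : Set G.Dart) (c : G.Dart → ℕ) : G.Dart → ℕ :=
  fun g => ∑ e, if rho ev T e = g then c e else 0

/-- indicator vector of a dart -/
def zuv (G : SimpleGraph V) (e0 : G.Dart) : G.Dart → ℤ := fun e' => if e' = e0 then 1 else 0

/-- the lattice Λ_T -/
def lat (ev : V → G.Dart) (T : Set G.Dart) : AddSubgroup (G.Dart → ℤ) :=
  AddSubgroup.closure (Set.range (dz G) ∪ (fun e0 => zuv G e0 - zuv G (ev e0.fst)) '' T)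

/-- the linear form attached to a dart -/
def wpoly (K : Type) [Field K] (ev : V → G.Dart) (e : G.Dart) : MvPolynomial G.Dart K :=
  X e - X (ev e.fst)

/-- the ideal J_G + (w_e : e ∈ T) -/
def idT (K : Type) [Field K] (ev : V → G.Dart) (T : Set G.Dart) :
    Ideal (MvPolynomial G.Dart K) :=
  lawrenceIdeal G K ⊔ Ideal.span (wpoly K ev '' T)

variable (ev : V → G.Dart) (T : Set G.Dart)

section Basic
variable (hev : ∀ v, (ev v).fst = v)

include hev in
lemma rho_ev (v : V) : rho ev T (ev v) = ev v := by
  unfold rho; split_ifs with h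
  · rw [hev]
  · rfl

include hev in
lemma rho_idem (e : G.Dart) : rho ev T (rho ev T e) = rho ev T e := by
  simp only [rho]
  split_ifs with h1 h2 <;> simp_all [hev] <;> exact ite_self _

include hev in
lemma rho_fst {e g : G.Dart} (h : rho ev T e = g) : e.fst = g.fst := by
  by_cases he : e ∈ T
  · rw [rho, if_pos he] at h; rw [← h, hev]
  · rw [rho, if_neg he] at h; rw [h]

end Basic

/-- image of a variable in the quotient ring -/
def xq (K : Type) [Field K] (ev : V → G.Dart) (T : Set G.Dart) (e : G.Dart) :
    MvPolynomial G.Dart K ⧸ idT K ev T :=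
  Ideal.Quotient.mk _ (X e)

/-- pooled monomial in the quotient ring -/
def Mon (K : Type) [Field K] (ev : V → G.Dart) (T : Set G.Dart) (a : G.Dart → ℕ) :
    MvPolynomial G.Dart K ⧸ idT K ev T :=
  ∏ e, xq K ev T e ^ a e

lemma xq_rho (e : G.Dart) : xq K ev T (rho ev T e) = xq K ev T e := by
  by_cases h : e ∈ T
  · rw [rho, if_pos h]
    refine (Ideal.Quotient.mk_eq_mk_iff_sub_mem _ _).2 ?_
    have h1 : wpoly K ev e ∈ Ideal.span (wpoly K ev '' T) := Ideal.subset_span ⟨e, h, rfl⟩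
    have h2 : -wpoly K ev e ∈ idT K ev T := Ideal.mem_sup_right (neg_mem h1)
    simpa [wpoly, neg_sub] using h2
  · rw [rho, if_neg h]

lemma Mon_pool (a : G.Dart → ℕ) : Mon K ev T a = ∏ g, xq K ev T g ^ Pn ev T a g := by
  unfold Mon Pn
  calc ∏ e, xq K ev T e ^ a e = ∏ e, xq K ev T (rho ev T e) ^ a e := by
        simp_rw [xq_rho]
    _ = ∏ g, ∏ e ∈ filter (fun e => rho ev T e = g) univ, xq K ev T (rho ev T e) ^ a e :=
        (Finset.prod_fiberwise univ (rho ev T) _).symm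
    _ = ∏ g, xq K ev T g ^ ∑ e, if rho ev T e = g then a e else 0 := by
        refine Finset.prod_congr rfl fun g _ => ?_
        rw [← Finset.sum_filter, ← Finset.prod_pow_eq_pow_sum]
        exact Finset.prod_congr rfl fun e he => by rw [(mem_filter.1 he).2]

lemma Mon_congr {a b : G.Dart → ℕ} (h : Pn ev T a = Pn ev T b) :
    Mon K ev T a = Mon K ev T b := by
  rw [Mon_pool, Mon_pool, h]

lemma Mon_add (a b : G.Dart → ℕ) :
    Mon K ev T (a + b) = Mon K ev T a * Mon K ev T b := by
  unfold Mon
  rw [← Finset.prod_mul_distrib]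
  exact Finset.prod_congr rfl fun e _ => by rw [Pi.add_apply, pow_add]

lemma Mon_fire (f : V → ℤ) :
    Mon K ev T (fun e => (dz G f e).toNat) = Mon K ev T (fun e => (- dz G f e).toNat) := by
  have h : (∏ e : G.Dart, X e ^ (f e.fst - f e.snd).toNat : MvPolynomial G.Dart K) -
      ∏ e : G.Dart, X e ^ (f e.snd - f e.fst).toNat ∈ idT K ev T :=
    Ideal.mem_sup_left (Ideal.subset_span ⟨f, rfl⟩)
  have := (Ideal.Quotient.eq (I := idT K ev T)).2 h
  unfold Mon xq
  simp only [← map_pow, ← map_prod]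
  unfold dz
  simp only [neg_sub]
  exact this

section Core
variable (hev : ∀ v, (ev v).fst = v)

lemma Pn_add (a b : G.Dart → ℕ) : Pn ev T (a + b) = Pn ev T a + Pn ev T b := by
  funext g
  simp only [Pn, Pi.add_apply, ← Finset.sum_add_distrib]
  exact Finset.sum_congr rfl fun e _ => by split_ifs <;> simp

lemma Pn_cast (a : G.Dart → ℕ) (g : G.Dart) :
    ((Pn ev T a g : ℤ)) = ∑ e, if rho ev T e = g then (a e : ℤ) else 0 := by
  simp [Pn, apply_ite (Nat.cast : ℕ → ℤ)]

lemma Pz_sub (c d : G.Dart → ℤ) : Pz ev T (c - d) = Pz ev T c - Pz ev T d := by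
  funext g
  simp only [Pz, Pi.sub_apply, ← Finset.sum_sub_distrib]
  exact Finset.sum_congr rfl fun e _ => by split_ifs <;> simp

lemma dz_sub (f f' : V → ℤ) : dz G (f - f') = dz G f - dz G f' := by
  funext e; simp only [dz, Pi.sub_apply]; ring

include hev in
lemma core : ∀ (N : ℕ) (f : V → ℤ) (a b : G.Dart → ℕ),
    (∑ v, (f v - univ.inf' univ_nonempty f).toNat) = N →
    (∀ g, (Pn ev T a g : ℤ) - (Pn ev T b g : ℤ) = Pz ev T (dz G f) g) →
    Mon K ev T a = Mon K ev T b := by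
  intro N
  induction N using Nat.strong_induction_on with
  | _ N IH =>
  intro f a b hN h
  set m := univ.inf' univ_nonempty f with hm
  by_cases h0 : ∀ v, f v = m
  · -- f is constant
    have hdz : dz G f = 0 := by
      funext e; simp [dz, h0 e.fst, h0 e.snd]
    refine Mon_congr ev T (funext fun g => ?_)
    have := h g
    rw [hdz] at this
    simp only [Pz, Pi.zero_apply, ite_self, Finset.sum_const_zero] at this
    exact_mod_cast sub_eq_zero.1 this
  · push_neg at h0
    obtain ⟨v1, hv1⟩ := h0
    have hv1' : m < f v1 := lt_of_le_of_ne (Finset.inf'_le _ (mem_univ v1)) (Ne.symm hv1)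
    set Mx := univ.sup' univ_nonempty f with hMx
    have hmM : m < Mx := lt_of_lt_of_le hv1' (Finset.le_sup' _ (mem_univ v1))
    set g1 : V → ℤ := fun v => if f v = Mx then 1 else 0 with hg1
    set dp : G.Dart → ℕ := fun e => (dz G g1 e).toNat with hdp
    set dm : G.Dart → ℕ := fun e => (- dz G g1 e).toNat with hdm
    -- positivity claim
    have hposz : ∀ g, (Pn ev T dp g : ℤ) ≤ Pn ev T a g := by
      intro g
      by_cases hgM : f g.fst = Mx
      · have h1 : (Pn ev T dp g : ℤ) ≤ Pz ev T (dz G f) g := by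
          rw [Pn_cast, Pz]
          refine Finset.sum_le_sum fun e _ => ?_
          split_ifs with hre
          · have hfst : e.fst = g.fst := rho_fst ev T hev hre
            by_cases hsnd : f e.snd = Mx
            · simp [hdp, dz, hg1, hfst, hgM, hsnd]
            · have hlt : f e.snd < Mx :=
                lt_of_le_of_ne (Finset.le_sup' _ (mem_univ e.snd)) hsnd
              have hdpe : dp e = 1 := by simp [hdp, dz, hg1, hfst, hgM, hsnd]
              rw [hdpe]
              simp only [dz, hfst, hgM]
              omega
          · exact le_refl 0
        have h2 := h g
        have h3 : (0:ℤ) ≤ Pn ev T b g := Int.natCast_nonneg _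
        omega
      · have hz : Pn ev T dp g = 0 := by
          refine Finset.sum_eq_zero fun e _ => ?_
          split_ifs with hre
          · have hfst : e.fst = g.fst := rho_fst ev T hev hre
            simp only [hdp, dz, hg1, hfst, if_neg hgM]
            omega
          · rfl
        simp [hz]
    have hpos : ∀ g, Pn ev T dp g ≤ Pn ev T a g := fun g => by exact_mod_cast hposz g
    set c' : G.Dart → ℕ := fun g => if rho ev T g = g then Pn ev T a g - Pn ev T dp g else 0
      with hc'
    have hPnc' : ∀ g, Pn ev T c' g
        = (if rho ev T g = g then Pn ev T a g - Pn ev T dp g else 0) := by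
      intro g
      rw [Pn, Finset.sum_eq_single g]
      · by_cases hg : rho ev T g = g <;> simp [hc', hg]
      · intro e _ hne
        split_ifs with hre
        · have hne2 : rho ev T e ≠ e := fun hc => hne (by rw [← hc, hre])
          simp [hc', hne2]
        · rfl
      · intro hg; exact absurd (mem_univ g) hg
    have hPc : Pn ev T (c' + dp) = Pn ev T a := by
      funext g
      rw [congrFun (Pn_add ev T c' dp) g, Pi.add_apply]
      by_cases hg : rho ev T g = g
      · rw [hPnc' g, if_pos hg, Nat.sub_add_cancel (hpos g)]
      · have hfib : ∀ e, rho ev T e ≠ g := fun e hre =>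
          hg (by rw [← hre, rho_idem ev T hev])
        have hz : ∀ (c : G.Dart → ℕ), Pn ev T c g = 0 := fun c =>
          Finset.sum_eq_zero fun e _ => if_neg (hfib e)
        rw [hPnc' g, if_neg hg, hz dp, hz a]
    have step1 : Mon K ev T a = Mon K ev T (c' + dp) := (Mon_congr ev T hPc).symm
    have step2 : Mon K ev T (c' + dp) = Mon K ev T (c' + dm) := by
      rw [Mon_add, Mon_add]
      congr 1
      rw [hdp, hdm]
      exact Mon_fire ev T g1
    set f' : V → ℤ := f - g1 with hf'
    have hf'le : ∀ v, f' v ≤ f v := by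
      intro v; simp only [hf', Pi.sub_apply, hg1]; split_ifs <;> omega
    have hf'ge : ∀ v, m ≤ f' v := by
      intro v
      have h4 : m ≤ f v := Finset.inf'_le _ (mem_univ v)
      simp only [hf', Pi.sub_apply, hg1]; split_ifs <;> omega
    have hinf' : univ.inf' univ_nonempty f' = m := by
      apply le_antisymm
      · obtain ⟨v0, _, hv0⟩ := Finset.exists_mem_eq_inf' univ_nonempty f
        have hfv0 : f v0 = m := hv0.symm
        have hne : f v0 ≠ Mx := by omega
        have : f' v0 = m := by simp only [hf', Pi.sub_apply, hg1, if_neg hne]; omega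
        exact this ▸ Finset.inf'_le _ (mem_univ v0)
      · exact Finset.le_inf' _ _ fun v _ => hf'ge v
    have hmsr : (∑ v, (f' v - univ.inf' univ_nonempty f').toNat) < N := by
      rw [hinf', ← hN]
      refine Finset.sum_lt_sum (fun v _ => ?_) ?_
      · have := hf'le v; omega
      · obtain ⟨vM, _, hvM⟩ := Finset.exists_mem_eq_sup' univ_nonempty f
        refine ⟨vM, mem_univ vM, ?_⟩
        have hfvM : f vM = Mx := hvM.symm
        have : f' vM = Mx - 1 := by
          simp only [hf', Pi.sub_apply, hg1, if_pos hfvM]; omega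
        omega
    have h' : ∀ g, (Pn ev T (c' + dm) g : ℤ) - (Pn ev T b g : ℤ) = Pz ev T (dz G f') g := by
      intro g
      have h6 : Pn ev T c' g + Pn ev T dp g = Pn ev T a g := by
        have h7 := congrFun hPc g
        rwa [congrFun (Pn_add ev T c' dp) g, Pi.add_apply] at h7
      have hdpm : (Pn ev T dp g : ℤ) - Pn ev T dm g = Pz ev T (dz G g1) g := by
        rw [Pn_cast, Pn_cast, ← Finset.sum_sub_distrib, Pz]
        refine Finset.sum_congr rfl fun e _ => ?_
        split_ifs
        · rw [hdp, hdm]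
          exact Int.toNat_sub_toNat_neg _
        · simp
      have hPnadd : (Pn ev T (c' + dm) g : ℤ) = Pn ev T c' g + Pn ev T dm g := by
        rw [congrFun (Pn_add ev T c' dm) g, Pi.add_apply]; push_cast; ring
      rw [hPnadd, hf', dz_sub, congrFun (Pz_sub ev T _ _) g, Pi.sub_apply]
      have h8 := h g
      omega
    exact step1.trans (step2.trans (IH _ hmsr f' (c' + dm) b rfl h'))

end Core

section Phi

/-- class of a dart indicator in the quotient group -/
def zeta (ev : V → G.Dart) (T : Set G.Dart) (e : G.Dart) : (G.Dart → ℤ) ⧸ lat ev T :=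
  QuotientAddGroup.mk (zuv G e)

/-- the monomial map to the group algebra of the quotient group -/
def phi (K : Type) [Field K] (ev : V → G.Dart) (T : Set G.Dart) :
    MvPolynomial G.Dart K →ₐ[K] AddMonoidAlgebra K ((G.Dart → ℤ) ⧸ lat ev T) :=
  aeval fun e => AddMonoidAlgebra.single (zeta ev T e) 1

lemma phi_prod_pow (n : G.Dart → ℕ) :
    phi K ev T (∏ e, X e ^ n e) =
      AddMonoidAlgebra.single (QuotientAddGroup.mk (fun e => (n e : ℤ))) 1 := by
  rw [map_prod]
  simp only [map_pow, phi, aeval_X, AddMonoidAlgebra.single_pow, one_pow]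
  rw [AddMonoidAlgebra.prod_single, Finset.prod_const_one]
  congr 1
  have : ∀ e : G.Dart, (n e • zeta ev T e : (G.Dart → ℤ) ⧸ lat ev T)
      = QuotientAddGroup.mk (n e • zuv G e) := by
    intro e; rfl
  simp only [this]
  rw [← QuotientAddGroup.mk_sum]
  congr 1
  funext e'
  simp only [Finset.sum_apply, Pi.smul_apply, zuv, smul_eq_mul]
  rw [Finset.sum_eq_single e']
  · simp
  · intro e _ hne; simp [Ne.symm hne]
  · intro h; exact absurd (mem_univ e') h

lemma monomial_eq_prod_pow (a : G.Dart →₀ ℕ) :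
    (monomial a (1:K) : MvPolynomial G.Dart K) = ∏ e, X e ^ a e := by
  rw [monomial_eq, C_1, one_mul]
  exact Finsupp.prod_fintype _ _ fun e => pow_zero _

lemma phi_monomial (a : G.Dart →₀ ℕ) (c : K) :
    phi K ev T (monomial a c) =
      AddMonoidAlgebra.single (QuotientAddGroup.mk (fun e => (a e : ℤ))) c := by
  have h1 : (monomial a c : MvPolynomial G.Dart K) = C c * monomial a 1 := by
    rw [C_mul_monomial, mul_one]
  rw [h1, map_mul, monomial_eq_prod_pow, phi_prod_pow]
  have h2 : phi K ev T (C c) = AddMonoidAlgebra.single 0 c := by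
    simp only [phi, algHom_C]
    rfl
  rw [h2, AddMonoidAlgebra.single_mul_single, zero_add, mul_one]

/-- generators of the Lawrence ideal are in the kernel of φ -/
lemma lawrence_sub_ker :
    lawrenceIdeal G K ≤ RingHom.ker (phi K ev T).toRingHom := by
  rw [lawrenceIdeal, Ideal.span_le]
  rintro p ⟨f, rfl⟩
  have h1 := phi_prod_pow (K := K) ev T (fun e => (f e.fst - f e.snd).toNat)
  have h2 := phi_prod_pow (K := K) ev T (fun e => (f e.snd - f e.fst).toNat)
  rw [SetLike.mem_coe, RingHom.mem_ker]
  show phi K ev T _ = 0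
  rw [map_sub, h1, h2, sub_eq_zero]
  congr 1
  rw [QuotientAddGroup.eq_iff_sub_mem]
  refine AddSubgroup.subset_closure (Set.mem_union_left _ ⟨f, ?_⟩)
  funext e
  simp only [dz, Pi.sub_apply]
  omega

lemma zeta_eq {e : G.Dart} (he : e ∈ T) : zeta ev T e = zeta ev T (ev e.fst) := by
  rw [zeta, zeta, QuotientAddGroup.eq_iff_sub_mem]
  exact AddSubgroup.subset_closure (Set.mem_union_right _ ⟨e, he, rfl⟩)

lemma wpoly_mem_ker {e : G.Dart} (he : e ∈ T) :
    (wpoly K ev e : MvPolynomial G.Dart K) ∈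
      RingHom.ker (phi K ev T).toRingHom := by
  rw [RingHom.mem_ker]
  show phi K ev T (wpoly K ev e) = 0
  rw [wpoly, map_sub]
  simp only [phi, aeval_X]
  rw [zeta_eq ev T he, sub_self]

lemma idT_sub_ker :
    idT K ev T ≤ RingHom.ker (phi K ev T).toRingHom := by
  rw [idT]
  refine sup_le (lawrence_sub_ker ev T) ?_
  rw [Ideal.span_le]
  rintro p ⟨e, he, rfl⟩
  exact wpoly_mem_ker ev T he

end Phi

section Ker

lemma Pz_add (c d : G.Dart → ℤ) : Pz ev T (c + d) = Pz ev T c + Pz ev T d := by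
  funext g
  simp only [Pz, Pi.add_apply, ← Finset.sum_add_distrib]
  exact Finset.sum_congr rfl fun e _ => by split_ifs <;> simp

lemma Pz_neg (c : G.Dart → ℤ) : Pz ev T (-c) = - Pz ev T c := by
  funext g
  simp only [Pz, Pi.neg_apply, ← Finset.sum_neg_distrib]
  exact Finset.sum_congr rfl fun e _ => by split_ifs <;> simp

lemma dz_zero : dz G (0 : V → ℤ) = 0 := by funext e; simp [dz]

lemma dz_add (f f' : V → ℤ) : dz G (f + f') = dz G f + dz G f' := by
  funext e; simp only [dz, Pi.add_apply]; ring

lemma dz_neg (f : V → ℤ) : dz G (-f) = - dz G f := by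
  funext e; simp only [dz, Pi.neg_apply]; ring

lemma Pz_zuv (e0 : G.Dart) :
    Pz ev T (zuv G e0) = fun g => if rho ev T e0 = g then 1 else 0 := by
  funext g
  rw [Pz, Finset.sum_eq_single e0]
  · simp [zuv]
  · intro e _ hne
    simp [zuv, hne]
  · intro h; exact absurd (mem_univ e0) h

variable (hev : ∀ v, (ev v).fst = v)

include hev in
lemma lat_exists_f {u : G.Dart → ℤ} (hu : u ∈ lat ev T) :
    ∃ f : V → ℤ, Pz ev T u = Pz ev T (dz G f) := by
  let Lam' : AddSubgroup (G.Dart → ℤ) :=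
    { carrier := {u | ∃ f : V → ℤ, Pz ev T u = Pz ev T (dz G f)}
      zero_mem' := ⟨0, by rw [dz_zero]⟩
      add_mem' := by
        rintro x y ⟨f1, h1⟩ ⟨f2, h2⟩
        exact ⟨f1 + f2, by rw [Pz_add, dz_add, Pz_add, h1, h2]⟩
      neg_mem' := by
        rintro x ⟨f1, h1⟩
        exact ⟨-f1, by rw [Pz_neg, dz_neg, Pz_neg, h1]⟩ }
  have hle : lat ev T ≤ Lam' := by
    rw [lat, AddSubgroup.closure_le]
    rintro u (⟨f, rfl⟩ | ⟨e0, he0, rfl⟩)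
    · exact ⟨f, rfl⟩
    · refine ⟨0, ?_⟩
      rw [dz_zero]
      have h1 : Pz ev T (zuv G e0 - zuv G (ev e0.fst)) =
          Pz ev T (zuv G e0) - Pz ev T (zuv G (ev e0.fst)) := Pz_sub ev T _ _
      rw [h1, Pz_zuv, Pz_zuv]
      have h2 : rho ev T e0 = ev e0.fst := if_pos he0
      have h3 : rho ev T (ev e0.fst) = ev e0.fst := rho_ev ev T hev e0.fst
      rw [h2, h3]
      funext g
      simp only [Pz, Pi.sub_apply, sub_self]
      simp
  exact hle hu

include hev in
lemma mk_monomial_eq {a b : G.Dart →₀ ℕ}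
    (hab : (fun e => (a e : ℤ) - (b e : ℤ)) ∈ lat ev T) :
    Ideal.Quotient.mk (idT K ev T) (monomial a 1) =
      Ideal.Quotient.mk (idT K ev T) (monomial b 1) := by
  obtain ⟨f, hf⟩ := lat_exists_f ev T hev hab
  have hmon : ∀ c : G.Dart →₀ ℕ,
      Ideal.Quotient.mk (idT K ev T) (monomial c 1) = Mon K ev T (fun e => c e) := by
    intro c
    rw [monomial_eq_prod_pow, map_prod]
    exact Finset.prod_congr rfl fun e _ => by rw [map_pow]; rfl
  rw [hmon a, hmon b]
  refine core ev T hev _ f _ _ rfl fun g => ?_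
  have h1 := congrFun hf g
  rw [Pn_cast, Pn_cast, ← Finset.sum_sub_distrib]
  rw [← h1, Pz]
  exact Finset.sum_congr rfl fun e _ => by split_ifs <;> simp

include hev in
lemma ker_sub_idT : ∀ (n : ℕ) (p : MvPolynomial G.Dart K), p.support.card = n →
    phi K ev T p = 0 → p ∈ idT K ev T := by
  intro n
  induction n using Nat.strong_induction_on with
  | _ n IH =>
  intro p hcard hker
  classical
  rcases Finset.eq_empty_or_nonempty p.support with hs | ⟨a, ha⟩
  · have : p = 0 := by
      ext a; by_contra hc
      exact absurd (MvPolynomial.mem_support_iff.2 hc) (by rw [hs]; simp)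
    rw [this]; exact Ideal.zero_mem _
  · -- evaluate phi p at the class of a
    have hsum : phi K ev T p = ∑ a' ∈ p.support,
        AddMonoidAlgebra.single (QuotientAddGroup.mk (fun e => (a' e : ℤ)) :
          (G.Dart → ℤ) ⧸ lat ev T) (coeff a' p) := by
      conv_lhs => rw [p.as_sum, map_sum]
      exact Finset.sum_congr rfl fun a' _ => phi_monomial ev T a' _
    have happ : (0:K) = ∑ a' ∈ p.support,
        (if (QuotientAddGroup.mk (fun e => (a' e : ℤ)) :
            (G.Dart → ℤ) ⧸ lat ev T) = QuotientAddGroup.mk (fun e => (a e : ℤ))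
          then coeff a' p else 0) := by
      have h0 := congrArg (fun q => q.coeff (QuotientAddGroup.mk (fun e => (a e : ℤ)) :
          (G.Dart → ℤ) ⧸ lat ev T)) (hker ▸ hsum)
      simp only [AddMonoidAlgebra.coeff_zero, Finsupp.coe_zero, Pi.zero_apply] at h0
      rw [AddMonoidAlgebra.coeff_sum, Finsupp.finset_sum_apply] at h0
      exact h0.trans (Finset.sum_congr rfl fun a' _ => AddMonoidAlgebra.coeff_single_apply)
    -- find another monomial in the same class
    have hex : ∃ b ∈ p.support, b ≠ a ∧
        (QuotientAddGroup.mk (fun e => (b e : ℤ)) : (G.Dart → ℤ) ⧸ lat ev T) =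
          QuotientAddGroup.mk (fun e => (a e : ℤ)) := by
      by_contra hc
      push_neg at hc
      rw [Finset.sum_eq_single a] at happ
      · rw [if_pos rfl] at happ
        exact (MvPolynomial.mem_support_iff.1 ha) happ.symm
      · intro b hb hba
        rcases hc b hb hba with h
        rw [if_neg h]
      · intro hna; exact absurd ha hna
    obtain ⟨b, hb, hba, hclass⟩ := hex
    set c := coeff a p with hc
    set q := p - C c * (monomial a 1 - monomial b 1) with hq
    have hcoeffq : ∀ x, coeff x q = coeff x p - c * ((if a = x then 1 else 0)
        - (if b = x then 1 else 0)) := by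
      intro x
      simp [hq, coeff_sub, coeff_C_mul, coeff_monomial, mul_sub]
    have hbnea : ¬ (b = a) := hba
    have hsupq : q.support ⊆ p.support.erase a := by
      intro x hx
      rw [MvPolynomial.mem_support_iff] at hx
      rw [Finset.mem_erase]
      constructor
      · rintro rfl
        rw [hcoeffq, if_pos rfl, if_neg hbnea] at hx
        simp [hc] at hx
      · rw [MvPolynomial.mem_support_iff]
        intro hpx
        by_cases hax : a = x
        · exact (MvPolynomial.mem_support_iff.1 ha) (hax ▸ hpx)
        · by_cases hbx : b = x
          · exact (MvPolynomial.mem_support_iff.1 hb) (hbx ▸ hpx)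
          · apply hx
            rw [hcoeffq, hpx, if_neg hax, if_neg hbx]
            ring
    have hcards : q.support.card < n := by
      calc q.support.card ≤ (p.support.erase a).card := Finset.card_le_card hsupq
        _ < p.support.card := Finset.card_erase_lt_of_mem ha
        _ = n := hcard
    have hkerq : phi K ev T q = 0 := by
      rw [hq, map_sub, map_mul, map_sub, hker]
      rw [phi_monomial, phi_monomial, hclass, sub_self, mul_zero, zero_sub, neg_zero]
    have hqmem := IH _ hcards q rfl hkerq
    have hmem2 : (monomial a 1 - monomial b 1 : MvPolynomial G.Dart K) ∈ idT K ev T := by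
      rw [← Ideal.Quotient.eq_zero_iff_mem, map_sub, sub_eq_zero]
      refine mk_monomial_eq ev T hev ?_
      have hfun : (fun e => (a e : ℤ) - (b e : ℤ)) =
          (fun e => (a e : ℤ)) - (fun e => (b e : ℤ)) := rfl
      rw [hfun, ← QuotientAddGroup.eq_iff_sub_mem]
      exact hclass.symm
    have : p = q + C c * (monomial a 1 - monomial b 1) := by rw [hq]; ring
    rw [this]
    exact Ideal.add_mem _ hqmem (Ideal.mul_mem_left _ _ hmem2)

end Ker

section Lap

/-- graph Laplacian via darts -/
def lap (G : SimpleGraph V) [DecidableRel G.Adj] (n : V → ℚ) : V → ℚ :=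
  fun v => ∑ e : G.Dart, if e.fst = v then n v - n e.snd else 0

lemma dart_sum_symm (F : G.Dart → ℚ) : ∑ e, F e = ∑ e : G.Dart, F e.symm :=
  Fintype.sum_bijective _ (SimpleGraph.Dart.symm_involutive (G := G)).bijective F
    (fun e => F e.symm) (fun e => rfl)

/-- Laplacian as a linear map -/
def lapL (G : SimpleGraph V) [DecidableRel G.Adj] : (V → ℚ) →ₗ[ℚ] (V → ℚ) where
  toFun := lap G
  map_add' x y := by
    funext v
    simp only [lap, Pi.add_apply, ← Finset.sum_add_distrib]
    exact Finset.sum_congr rfl fun e _ => by split_ifs <;> ring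
  map_smul' c x := by
    funext v
    simp only [lap, Pi.smul_apply, RingHom.id_apply, smul_eq_mul, Finset.mul_sum]
    exact Finset.sum_congr rfl fun e _ => by split_ifs <;> ring

/-- the sum functional -/
def sumL : (V → ℚ) →ₗ[ℚ] ℚ where
  toFun n := ∑ v, n v
  map_add' x y := by simp [Finset.sum_add_distrib]
  map_smul' c x := by simp [Finset.mul_sum]

lemma lap_sum_zero (n : V → ℚ) : ∑ v, lap G n v = 0 := by
  simp only [lap]
  rw [Finset.sum_comm]
  have h1 : ∀ e : G.Dart, (∑ v, if e.fst = v then n v - n e.snd else 0)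
      = n e.fst - n e.snd := by
    intro e
    rw [Finset.sum_eq_single e.fst]
    · simp
    · intro v _ hne; rw [if_neg (Ne.symm hne)]
    · intro h; exact absurd (mem_univ _) h
  rw [Finset.sum_congr rfl fun e _ => h1 e]
  have h2 : ∑ e : G.Dart, n e.fst = ∑ e : G.Dart, n e.snd := by
    have h3 := dart_sum_symm (G := G) (fun e => n e.fst)
    simpa using h3
  rw [Finset.sum_sub_distrib, h2, sub_self]

lemma lap_const_zero (c : ℚ) : lap G (fun _ => c) = 0 := by
  funext v
  rw [lap]
  exact Finset.sum_eq_zero fun e _ => by split_ifs <;> simp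

variable (hG : G.Connected)

include hG in
lemma lap_ker_const (n : V → ℚ) (hn : ∀ v, lap G n v = 0) :
    ∀ v, n v = univ.sup' univ_nonempty n := by
  set Mx := univ.sup' univ_nonempty n with hMx
  have key : ∀ v, n v = Mx → ∀ u, G.Adj v u → n u = Mx := by
    intro v hv u hadj
    have h2 : ∀ e : G.Dart, e ∈ univ →
        (0:ℚ) ≤ (if e.fst = v then n v - n e.snd else 0) := by
      intro e _
      split_ifs
      · rw [hv]
        have := Finset.le_sup' n (mem_univ e.snd)
        linarith
      · exact le_refl 0
    have h3 := (Finset.sum_eq_zero_iff_of_nonneg h2).1 (hn v)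
    have h4 := h3 (SimpleGraph.Dart.mk (v, u) hadj) (mem_univ _)
    rw [if_pos rfl] at h4
    have : n u = n v := by
      have : n v - n u = 0 := h4
      linarith
    rw [this, hv]
  obtain ⟨v0, _, hv0⟩ := Finset.exists_mem_eq_sup' univ_nonempty n
  have walkstep : ∀ (x y : V), G.Walk x y → n x = Mx → n y = Mx := by
    intro x y p
    induction p with
    | nil => exact id
    | cons hadj p ih => intro hx; exact ih (key _ hx _ hadj)
  intro v
  exact walkstep v0 v (hG.preconnected v0 v).some hv0.symm

include hG in
lemma lap_surj (y : V → ℚ) (hy : ∑ v, y v = 0) : ∃ n : V → ℚ, ∀ v, lap G n v = y v := by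
  have hle : LinearMap.range (lapL G) ≤ LinearMap.ker (sumL (V := V)) := by
    rintro _ ⟨n, rfl⟩
    exact lap_sum_zero n
  have hone : (fun _ => (1:ℚ)) ≠ (0 : V → ℚ) := by
    intro hc
    have := congrFun hc (Classical.arbitrary V)
    norm_num at this
  have hkerlap : LinearMap.ker (lapL G) = Submodule.span ℚ {(fun _ => (1:ℚ) : V → ℚ)} := by
    apply le_antisymm
    · intro n hn
      rw [LinearMap.mem_ker] at hn
      have h5 := lap_ker_const hG n (fun v => congrFun hn v)
      rw [Submodule.mem_span_singleton]
      exact ⟨univ.sup' univ_nonempty n, by funext v; rw [Pi.smul_apply, smul_eq_mul, mul_one,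
        ← h5 v]⟩
    · rw [Submodule.span_le, Set.singleton_subset_iff]
      exact lap_const_zero 1
  have hrk1 : Module.finrank ℚ (LinearMap.ker (lapL G)) = 1 := by
    rw [hkerlap]
    exact finrank_span_singleton hone
  have hsurj : Function.Surjective (sumL (V := V)) := by
    intro c
    refine ⟨fun _ => c / (Fintype.card V : ℚ), ?_⟩
    have hcard : (Fintype.card V : ℚ) ≠ 0 := by
      simp [Fintype.card_ne_zero]
    simp only [sumL, LinearMap.coe_mk, AddHom.coe_mk, Finset.sum_const, card_univ,
      nsmul_eq_mul]
    field_simp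
  have hrksum : Module.finrank ℚ (LinearMap.ker (sumL (V := V))) + 1 = Fintype.card V := by
    have := LinearMap.finrank_range_add_finrank_ker (sumL (V := V))
    rw [LinearMap.range_eq_top.2 hsurj] at this
    rw [finrank_top, Module.finrank_self] at this
    rw [Module.finrank_pi] at this
    omega
  have hrkran : Module.finrank ℚ (LinearMap.range (lapL G)) + 1 = Fintype.card V := by
    have := LinearMap.finrank_range_add_finrank_ker (lapL G)
    rw [hrk1, Module.finrank_pi] at this
    exact this
  have heq : LinearMap.range (lapL G) = LinearMap.ker (sumL (V := V)) :=
    Submodule.eq_of_le_of_finrank_le hle (by omega)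
  have hymem : y ∈ LinearMap.range (lapL G) := by
    rw [heq]
    exact hy
  obtain ⟨n, hn⟩ := hymem
  exact ⟨n, fun v => congrFun hn v⟩

end Lap

section Chi

variable (hev : ∀ v, (ev v).fst = v) (hG : G.Connected)
  (hT : ∀ e' ∈ T, e' ≠ ev e'.fst)

include hev hG hT in
lemma exists_chi {e : G.Dart} (heT : e ∉ T) (hene : e ≠ ev e.fst) :
    ∃ χ : ((G.Dart → ℤ) ⧸ lat ev T) →+ ℚ,
      χ (zeta ev T e) ≠ χ (zeta ev T (ev e.fst)) := by
  classical
  -- solve the Laplace equation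
  set y : V → ℚ := fun v => (if v = e.snd then 1 else 0) - (if v = e.fst then 1 else 0)
    with hy
  have hne : e.fst ≠ e.snd := G.ne_of_adj e.adj
  have hysum : ∑ v, y v = 0 := by
    rw [hy]
    rw [Finset.sum_sub_distrib]
    rw [Finset.sum_ite_eq' univ e.snd (fun _ => (1:ℚ))]
    rw [Finset.sum_ite_eq' univ e.fst (fun _ => (1:ℚ))]
    simp
  obtain ⟨n, hn⟩ := lap_surj hG y hysum
  -- the dart weight
  set l : G.Dart → ℚ := fun e' => n e'.fst + (if e' = e then 1 else 0) with hl
  -- the functional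
  set lhom : (G.Dart → ℤ) →+ ℚ :=
    { toFun := fun u => ∑ e', (u e' : ℚ) * l e'
      map_zero' := by simp
      map_add' := by
        intro u u'
        rw [← Finset.sum_add_distrib]
        refine Finset.sum_congr rfl fun e' _ => ?_
        rw [Pi.add_apply]
        push_cast
        ring } with hlhom
  have hlz : ∀ e0 : G.Dart, lhom (zuv G e0) = l e0 := by
    intro e0
    rw [hlhom]
    simp only [AddMonoidHom.coe_mk, ZeroHom.coe_mk]
    rw [Finset.sum_eq_single e0]
    · simp [zuv]
    · intro e' _ hne'; simp [zuv, hne']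
    · intro h; exact absurd (mem_univ e0) h
  have hker : ∀ u ∈ lat ev T, lhom u = 0 := by
    have hclos : lat ev T ≤ lhom.ker := by
      rw [lat, AddSubgroup.closure_le]
      rintro u (⟨f, rfl⟩ | ⟨e0, he0, rfl⟩)
      · -- the differential part
        rw [SetLike.mem_coe, AddMonoidHom.mem_ker, hlhom]
        simp only [AddMonoidHom.coe_mk, ZeroHom.coe_mk]
        have hsplit : ∀ e' : G.Dart, ((dz G f e' : ℤ) : ℚ) * l e'
            = ((f e'.fst : ℚ) - f e'.snd) * n e'.fst
              + ((f e'.fst : ℚ) - f e'.snd) * (if e' = e then 1 else 0) := by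
          intro e'
          rw [hl, dz]
          push_cast
          ring
        rw [Finset.sum_congr rfl fun e' _ => hsplit e']
        rw [Finset.sum_add_distrib]
        have hsecond : ∑ e' : G.Dart, ((f e'.fst : ℚ) - f e'.snd) * (if e' = e then 1 else 0)
            = (f e.fst : ℚ) - f e.snd := by
          rw [Finset.sum_eq_single e]
          · simp
          · intro e' _ hne'; simp [hne']
          · intro h; exact absurd (mem_univ e) h
        have hfirst : ∑ e' : G.Dart, ((f e'.fst : ℚ) - f e'.snd) * n e'.fst
            = (f e.snd : ℚ) - f e.fst := by
          have hexp : ∀ e' : G.Dart, ((f e'.fst : ℚ) - f e'.snd) * n e'.fst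
              = (f e'.fst : ℚ) * n e'.fst - (f e'.snd : ℚ) * n e'.fst := by
            intro e'; ring
          rw [Finset.sum_congr rfl fun e' _ => hexp e', Finset.sum_sub_distrib]
          have hswap : ∑ e' : G.Dart, (f e'.snd : ℚ) * n e'.fst
              = ∑ e' : G.Dart, (f e'.fst : ℚ) * n e'.snd := by
            have h6 := dart_sum_symm (G := G) (fun e' => (f e'.snd : ℚ) * n e'.fst)
            simpa using h6
          rw [hswap, ← Finset.sum_sub_distrib]
          have hmerge : ∀ e' : G.Dart, (f e'.fst : ℚ) * n e'.fst - (f e'.fst : ℚ) * n e'.snd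
              = (f e'.fst : ℚ) * (n e'.fst - n e'.snd) := by
            intro e'; ring
          rw [Finset.sum_congr rfl fun e' _ => hmerge e']
          -- group by the head vertex
          rw [← Finset.sum_fiberwise univ (fun e' : G.Dart => e'.fst)
            (fun e' => (f e'.fst : ℚ) * (n e'.fst - n e'.snd))]
          have hfib : ∀ v : V, ∑ e' ∈ univ.filter (fun e' : G.Dart => e'.fst = v),
              (f e'.fst : ℚ) * (n e'.fst - n e'.snd) = (f v : ℚ) * y v := by
            intro v
            rw [← hn v, lap, ← Finset.sum_filter, Finset.mul_sum]
            refine Finset.sum_congr rfl fun e' he' => ?_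
            rw [(mem_filter.1 he').2]
          rw [Finset.sum_congr rfl fun v _ => hfib v]
          rw [hy]
          have hterm : ∀ v : V, (f v : ℚ) * ((if v = e.snd then 1 else 0)
              - (if v = e.fst then 1 else 0))
              = (f v : ℚ) * (if v = e.snd then 1 else 0)
                - (f v : ℚ) * (if v = e.fst then 1 else 0) := by
            intro v; ring
          rw [Finset.sum_congr rfl fun v _ => hterm v, Finset.sum_sub_distrib]
          rw [Finset.sum_eq_single e.snd (fun v _ hv => by simp [hv])
            (fun h => absurd (mem_univ _) h)]
          rw [Finset.sum_eq_single e.fst (fun v _ hv => by simp [hv])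
            (fun h => absurd (mem_univ _) h)]
          simp
        rw [hfirst, hsecond]
        ring
      · -- the merging part
        rw [SetLike.mem_coe, AddMonoidHom.mem_ker, map_sub, hlz, hlz]
        have h7 : e0 ≠ e := fun hc => heT (hc ▸ he0)
        have h8 : ev e0.fst ≠ e := by
          intro hc
          have h9 : e.fst = e0.fst := by rw [← hc, hev]
          exact hene (by rw [h9, hc])
        rw [hl]
        simp only [if_neg h7, if_neg h8, hev]
        ring
    exact fun u hu => hclos hu
  refine ⟨QuotientAddGroup.lift (lat ev T) lhom hker, ?_⟩
  have h10 : ∀ e0 : G.Dart, QuotientAddGroup.lift (lat ev T) lhom hker (zeta ev T e0)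
      = l e0 := fun e0 => hlz e0
  rw [h10, h10, hl]
  have h11 : ev e.fst ≠ e := Ne.symm hene
  simp only [if_pos rfl, if_neg h11, hev]
  intro hc
  norm_num at hc

end Chi

section NZD

lemma ama_nzd {A : Type} [AddCommGroup A] {K : Type} [Field K] (χ : A →+ ℚ) {α β : A}
    (hab : χ α ≠ χ β) (g : AddMonoidAlgebra K A)
    (hg : (AddMonoidAlgebra.single α 1 - AddMonoidAlgebra.single β 1) * g = 0) : g = 0 := by
  suffices H : ∀ (α β : A), χ β < χ α → ∀ g : AddMonoidAlgebra K A,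
      (AddMonoidAlgebra.single α 1 - AddMonoidAlgebra.single β 1) * g = 0 → g = 0 by
    rcases hab.lt_or_gt with h | h
    · refine H β α h g ?_
      have : (AddMonoidAlgebra.single β (1:K) - AddMonoidAlgebra.single α 1) * g
          = -((AddMonoidAlgebra.single α (1:K) - AddMonoidAlgebra.single β 1) * g) := by
        ring
      rw [this, hg, neg_zero]
    · exact H α β h g hg
  intro α β hlt g hg
  by_contra hgne
  have hsupp : g.coeff.support.Nonempty :=
    Finsupp.support_nonempty_iff.2 (by rwa [Ne, AddMonoidAlgebra.coeff_eq_zero])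
  obtain ⟨s, hs, hmax⟩ := Finset.exists_max_image g.coeff.support (fun t => χ t) hsupp
  have h1 : ((AddMonoidAlgebra.single α (1:K) - AddMonoidAlgebra.single β 1) * g
        : AddMonoidAlgebra K A).coeff (α + s)
      = g.coeff s - g.coeff (α - β + s) := by
    rw [sub_mul, AddMonoidAlgebra.coeff_sub, Finsupp.sub_apply]
    rw [AddMonoidAlgebra.coeff_single_mul_apply, AddMonoidAlgebra.coeff_single_mul_apply]
    rw [one_mul, one_mul]
    congr 1
    · congr 1; abel
    · congr 1; abel
  have h2 : g.coeff (α - β + s) = 0 := by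
    by_contra hc
    have hmem : α - β + s ∈ g.coeff.support := Finsupp.mem_support_iff.2 hc
    have h3 := hmax _ hmem
    rw [map_add, map_sub] at h3
    linarith
  rw [hg, h2, sub_zero] at h1
  have h4 : ((0 : AddMonoidAlgebra K A)).coeff (α + s) = 0 := rfl
  rw [h4] at h1
  exact (Finsupp.mem_support_iff.1 hs) h1.symm

end NZD

section Step
variable (hev : ∀ v, (ev v).fst = v) (hG : G.Connected)
  (hT : ∀ e' ∈ T, e' ≠ ev e'.fst)

include hev hG hT in
lemma reg_step {e : G.Dart} (heT : e ∉ T) (hene : e ≠ ev e.fst)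
    (g : MvPolynomial G.Dart K) (hg : wpoly K ev e * g ∈ idT K ev T) :
    g ∈ idT K ev T := by
  obtain ⟨χ, hχ⟩ := exists_chi ev T hev hG hT heT hene
  have h1 : phi K ev T (wpoly K ev e * g) = 0 := by
    have h0 := idT_sub_ker ev T hg
    rw [RingHom.mem_ker] at h0
    exact h0
  rw [map_mul] at h1
  have h2 : phi K ev T (wpoly K ev e) = AddMonoidAlgebra.single (zeta ev T e) 1
      - AddMonoidAlgebra.single (zeta ev T (ev e.fst)) 1 := by
    rw [wpoly, map_sub]
    simp only [phi, aeval_X]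
  rw [h2] at h1
  have h3 : phi K ev T g = 0 := ama_nzd χ hχ _ h1
  exact ker_sub_idT ev T hev _ g rfl h3

end Step

end

end Stmt12Aux

section Quot

/-- kernel of the composite projection -/
lemma psi_ker_iff {S : Type} [CommRing S] (J I : Ideal S) (s : S) :
    ((I • ⊤ : Submodule S (S ⧸ J)).mkQ.comp (J : Submodule S S).mkQ) s = 0 ↔ s ∈ J ⊔ I := by
  have hIT : (I • ⊤ : Submodule S (S ⧸ J)) = Submodule.map (J : Submodule S S).mkQ I := by
    calc I • (⊤ : Submodule S (S ⧸ J))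
        = I • (Submodule.map (J : Submodule S S).mkQ ⊤) := by
          rw [Submodule.map_top, Submodule.range_mkQ]
      _ = Submodule.map (J : Submodule S S).mkQ (I • ⊤) := by
          rw [Submodule.map_smul'']
      _ = Submodule.map (J : Submodule S S).mkQ I := by
          rw [Ideal.smul_eq_mul, Ideal.mul_top]
  rw [LinearMap.comp_apply, Submodule.mkQ_apply, Submodule.mkQ_apply,
    Submodule.Quotient.mk_eq_zero, hIT]
  have hcm : Submodule.comap (J : Submodule S S).mkQ
      (Submodule.map (J : Submodule S S).mkQ I) = I ⊔ (J : Submodule S S) := by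
    rw [Submodule.comap_map_eq, Submodule.ker_mkQ]
  constructor
  · intro h
    have : s ∈ Submodule.comap (J : Submodule S S).mkQ
        (Submodule.map (J : Submodule S S).mkQ I) := h
    rw [hcm] at this
    rw [sup_comm]
    exact this
  · intro h
    have h2 : s ∈ I ⊔ (J : Submodule S S) := by rw [sup_comm] at h; exact h
    rw [← hcm] at h2
    exact h2

lemma smul_reg_of_quot {S : Type} [CommRing S] (J I : Ideal S) (r : S)
    (h : ∀ g : S, r * g ∈ J ⊔ I → g ∈ J ⊔ I) :
    IsSMulRegular ((S ⧸ J) ⧸ (I • ⊤ : Submodule S (S ⧸ J))) r := by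
  set ψ : S →ₗ[S] (S ⧸ J) ⧸ (I • ⊤ : Submodule S (S ⧸ J)) :=
    (I • ⊤ : Submodule S (S ⧸ J)).mkQ.comp (J : Submodule S S).mkQ with hψ
  have hsurj : Function.Surjective ψ :=
    (Submodule.mkQ_surjective _).comp (Submodule.mkQ_surjective _)
  intro x y hxy
  obtain ⟨gx, rfl⟩ := hsurj x
  obtain ⟨gy, rfl⟩ := hsurj y
  have hxy' : r • ψ gx = r • ψ gy := hxy
  have h5 : ψ (r * (gx - gy)) = 0 := by
    have : r * (gx - gy) = r • gx - r • gy := by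
      rw [smul_eq_mul, smul_eq_mul]; ring
    rw [this, map_sub, map_smul, map_smul, hxy', sub_self]
  have h6 : r * (gx - gy) ∈ J ⊔ I := (psi_ker_iff J I _).1 h5
  have h7 : gx - gy ∈ J ⊔ I := h _ h6
  have h8 : ψ (gx - gy) = 0 := (psi_ker_iff J I _).2 h7
  rw [map_sub, sub_eq_zero] at h8
  exact h8

end Quot

open Stmt12Aux in
theorem stmt12 (V : Type) [Fintype V] [Nonempty V] [DecidableEq V]
    (G : SimpleGraph V) [DecidableRel G.Adj] (hG : G.Connected)
    (K : Type) [Field K]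
    (ev : V → G.Dart) (hev : ∀ v, (ev v).fst = v)
    (l : List (MvPolynomial G.Dart K)) (hl : l.Nodup)
    (hset : {p | p ∈ l} =
      {p : MvPolynomial G.Dart K | ∃ e : G.Dart, e ≠ ev e.fst ∧ p = X e - X (ev e.fst)}) :
    RingTheory.Sequence.IsRegular (MvPolynomial G.Dart K ⧸ lawrenceIdeal G K) l := by
  classical
  rw [RingTheory.Sequence.isRegular_iff]
  constructor
  · -- weak regularity
    rw [RingTheory.Sequence.isWeaklyRegular_iff]
    intro i hi
    set Ti : Set G.Dart := {e | e ≠ ev e.fst ∧ wpoly K ev e ∈ l.take i} with hTi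
    have hofl : Ideal.ofList (l.take i) = Ideal.span (wpoly K ev '' Ti) := by
      unfold Ideal.ofList
      congr 1
      ext p
      constructor
      · intro hp
        have hpl : p ∈ l := List.take_subset i l hp
        obtain ⟨e, he1, rfl⟩ := (Set.ext_iff.1 hset p).1 hpl
        exact ⟨e, ⟨he1, hp⟩, rfl⟩
      · rintro ⟨e, ⟨he1, he2⟩, rfl⟩
        exact he2
    have hmem : l[i] ∈ l := List.getElem_mem hi
    obtain ⟨e0, he0ne, he0⟩ := (Set.ext_iff.1 hset _).1 hmem
    have hnotake : l[i] ∉ l.take i := by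
      intro hmem2
      obtain ⟨j, hj, hje⟩ := List.mem_iff_getElem.1 hmem2
      have hjlt : j < i := lt_of_lt_of_le hj (by simp [List.length_take])
      have hjl : j < l.length := lt_trans hjlt hi
      have : l[j] = l[i] := by rw [← List.getElem_take (h := hj)]; exact hje
      rw [hl.getElem_inj_iff] at this
      omega
    have he0T : e0 ∉ Ti := by
      rintro ⟨-, hmem2⟩
      rw [wpoly, ← he0] at hmem2
      exact hnotake hmem2
    refine smul_reg_of_quot (lawrenceIdeal G K) (Ideal.ofList (l.take i)) l[i] ?_
    intro g hg
    have hsup : lawrenceIdeal G K ⊔ Ideal.ofList (l.take i) = idT K ev Ti := by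
      rw [hofl, idT]
    rw [hsup] at hg ⊢
    rw [he0] at hg
    exact reg_step ev Ti hev hG (fun e' he' => he'.1) he0T he0ne g hg
  · -- nontriviality
    intro htop
    set Tall : Set G.Dart := {e | e ≠ ev e.fst} with hTall
    have hofl : Ideal.ofList l = Ideal.span (wpoly K ev '' Tall) := by
      unfold Ideal.ofList
      congr 1
      ext p
      constructor
      · intro hp
        obtain ⟨e, he1, rfl⟩ := (Set.ext_iff.1 hset p).1 hp
        exact ⟨e, he1, rfl⟩
      · rintro ⟨e, he1, rfl⟩
        exact (Set.ext_iff.1 hset _).2 ⟨e, he1, rfl⟩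
    -- 1 lies in the sup
    have hone : (1 : MvPolynomial G.Dart K) ∈ lawrenceIdeal G K ⊔ Ideal.ofList l := by
      rw [← psi_ker_iff]
      rw [LinearMap.comp_apply, Submodule.mkQ_apply, Submodule.mkQ_apply,
        Submodule.Quotient.mk_eq_zero]
      rw [← htop]
      trivial
    have hone2 : (1 : MvPolynomial G.Dart K) ∈ idT K ev Tall := by
      rw [idT, ← hofl]
      exact hone
    have h3 := idT_sub_ker ev Tall hone2
    rw [RingHom.mem_ker] at h3
    have h4 : (1 : AddMonoidAlgebra K ((G.Dart → ℤ) ⧸ lat ev Tall)) = 0 := by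
      rw [← map_one (phi K ev Tall)]
      exact h3
    rw [AddMonoidAlgebra.one_def] at h4
    rw [AddMonoidAlgebra.single_eq_zero] at h4
    exact one_ne_zero h4
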